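/- (Proposition 2.10 of the paper.) Let Γ be a countable type with a graph distance 𝐝 : Γ → Γ → ℕ and constants κ > 0, d ≥ 1 such that every sphere {y : 𝐝(x,y) = r} has at most κ·(1+r)^{d−1} elements. Let A be a complex Banach algebra, Z ⊆ Γ nonempty, 0 < p < 1, b, b' > 0 and 0 < b'' < min(b, b'). Let Φ, Ψ be maps from finite subsets of Γ to A vanishing on ∅, and N, M ≥ 0 such that for every x ∈ Γ: ∑_{Y ∋ x} ‖Φ(Y)‖·exp(b'·D(Y)^p) ≤ N and ∑_{Y' ∋ x} ‖Ψ(Y')‖·exp(b·D_Z(Y')^p) ≤ M (both families summable). For each nonempty finite X ⊆ Γ define δ^Φ(Ψ)(X) = ∑ i·[Φ(Y), Ψ(Y')], the (finite) sum running over pairs of nonempty subsets Y, Y' of X with Y ∪ Y' = X and Y ∩ Y' ≠ ∅. Then there exists a constant C_δ, depending only on b, b', b'', p, d and κ, such that for every x ∈ Γ the family (‖δ^Φ(Ψ)(X)‖·exp(b''·D_Z(X)^p))_{X ∋ x, X nonempty finite} is summable with sum at most C_δ·N·M. -/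

import Mathlib

open scoped ENNReal

open Real in
lemma my_rpow_add_le {x y q : ℝ} (hx : 0 ≤ x) (hy : 0 ≤ y) (hq : 0 ≤ q) (hq1 : q ≤ 1) :
    (x + y) ^ q ≤ x ^ q + y ^ q := by
  have h := NNReal.rpow_add_le_add_rpow (x.toNNReal) (y.toNNReal) hq hq1
  rw [← NNReal.coe_le_coe] at h
  push_cast at h
  rwa [Real.coe_toNNReal x hx, Real.coe_toNNReal y hy] at h

lemma exists_poly_exp_bound (p β κ : ℝ) (d : ℕ) (hp0 : 0 < p) (hp1 : p ≤ 1)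
    (hβ : 0 < β) (hκ : 0 < κ) :
    ∃ C₁ : ℝ, 1 ≤ C₁ ∧ ∀ t : ℝ, 0 ≤ t → κ * (1 + t) ^ d ≤ C₁ * Real.exp (β * t ^ p) := by
  set q : ℝ := p / 2 with hqdef
  set A : ℝ := 2 * d / p with hAdef
  have hq0 : 0 < q := by positivity
  have hq1 : q ≤ 1 := by rw [hqdef]; linarith
  have hA0 : 0 ≤ A := by positivity
  refine ⟨max 1 (κ * Real.exp (A + A ^ 2 / (4 * β))), le_max_left _ _, fun t ht => ?_⟩
  have h1t : (0:ℝ) < 1 + t := by linarith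
  have key : (d : ℝ) * Real.log (1 + t) ≤ A + A ^ 2 / (4 * β) + β * t ^ p := by
    have e1 : (d : ℝ) * Real.log (1 + t) = A * Real.log ((1 + t) ^ q) := by
      rw [Real.log_rpow h1t, hqdef, hAdef]
      field_simp
    have e2 : Real.log ((1 + t) ^ q) ≤ (1 + t) ^ q := by
      have := Real.log_le_sub_one_of_pos (Real.rpow_pos_of_pos h1t q)
      linarith
    have e3 : (1 + t) ^ q ≤ 1 + t ^ q := by
      have := my_rpow_add_le (le_refl (0:ℝ) |>.trans zero_le_one) ht hq0.le hq1
      simpa [Real.one_rpow] using this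
    have e4 : A * t ^ q ≤ β * t ^ p + A ^ 2 / (4 * β) := by
      have hs : t ^ p = (t ^ q) ^ 2 := by
        rw [← Real.rpow_natCast (t ^ q) 2, ← Real.rpow_mul ht]
        norm_num [hqdef]
      set s := t ^ q
      rw [hs]
      have h4 : A * s - β * s ^ 2 ≤ A ^ 2 / (4 * β) := by
        rw [le_div_iff₀ (by positivity : (0:ℝ) < 4 * β)]
        nlinarith [sq_nonneg (2 * β * s - A)]
      linarith
    calc (d : ℝ) * Real.log (1 + t) = A * Real.log ((1 + t) ^ q) := e1
      _ ≤ A * (1 + t ^ q) := by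
          apply mul_le_mul_of_nonneg_left _ hA0
          exact e2.trans e3
      _ = A + A * t ^ q := by ring
      _ ≤ A + (β * t ^ p + A ^ 2 / (4 * β)) := by linarith
      _ = A + A ^ 2 / (4 * β) + β * t ^ p := by ring
  have expand : κ * (1 + t) ^ d = κ * Real.exp ((d : ℝ) * Real.log (1 + t)) := by
    rw [← Real.log_pow, Real.exp_log (by positivity)]
  rw [expand]
  calc κ * Real.exp ((d : ℝ) * Real.log (1 + t))
      ≤ κ * Real.exp (A + A ^ 2 / (4 * β) + β * t ^ p) := by
        apply mul_le_mul_of_nonneg_left (Real.exp_le_exp.2 key) hκ.le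
    _ = κ * Real.exp (A + A ^ 2 / (4 * β)) * Real.exp (β * t ^ p) := by
        rw [Real.exp_add]; ring
    _ ≤ max 1 (κ * Real.exp (A + A ^ 2 / (4 * β))) * Real.exp (β * t ^ p) := by
        apply mul_le_mul_of_nonneg_right (le_max_right _ _) (Real.exp_nonneg _)

/-- The diameter `D(X) = max {𝐝(x,y) : x, y ∈ X}` of a finite subset of `Γ`. -/
def finsetDiam {Γ : Type*} (dist : Γ → Γ → ℕ) (X : Finset Γ) : ℕ :=
  X.sup fun x => X.sup fun y => dist x y

/-- The distance `𝐝(X,Z) = min {𝐝(x,z) : x ∈ X, z ∈ Z}` from a finite set `X` to a set `Z`. -/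
noncomputable def finsetDistToSet {Γ : Type*} (dist : Γ → Γ → ℕ) (X : Finset Γ) (Z : Set Γ) : ℕ :=
  sInf {n : ℕ | ∃ x ∈ X, ∃ z ∈ Z, dist x z = n}

/-- `D_Z(X) = D(X) + 𝐝(X,Z)`. -/
noncomputable def DZ {Γ : Type*} (dist : Γ → Γ → ℕ) (Z : Set Γ) (X : Finset Γ) : ℕ :=
  finsetDiam dist X + finsetDistToSet dist X Z

lemma dist_le_finsetDiam {Γ : Type*} (dist : Γ → Γ → ℕ) {X : Finset Γ} {a c : Γ}
    (ha : a ∈ X) (hc : c ∈ X) : dist a c ≤ finsetDiam dist X :=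
  le_trans (Finset.le_sup hc) (Finset.le_sup (f := fun x => X.sup fun y => dist x y) ha)

lemma finsetDiam_union_le {Γ : Type*} [DecidableEq Γ] (dist : Γ → Γ → ℕ)
    (htri : ∀ x y z : Γ, dist x z ≤ dist x y + dist y z)
    {Y Y' X : Finset Γ} (hU : Y ∪ Y' = X) (hI : (Y ∩ Y').Nonempty) :
    finsetDiam dist X ≤ finsetDiam dist Y + finsetDiam dist Y' := by
  obtain ⟨z, hz⟩ := hI
  rw [Finset.mem_inter] at hz
  apply Finset.sup_le
  intro a ha
  apply Finset.sup_le
  intro c hc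
  rw [← hU, Finset.mem_union] at ha hc
  rcases ha with ha | ha <;> rcases hc with hc | hc
  · exact le_trans (dist_le_finsetDiam dist ha hc) (Nat.le_add_right _ _)
  · calc dist a c ≤ dist a z + dist z c := htri a z c
      _ ≤ finsetDiam dist Y + finsetDiam dist Y' :=
        Nat.add_le_add (dist_le_finsetDiam dist ha hz.1) (dist_le_finsetDiam dist hz.2 hc)
  · calc dist a c ≤ dist a z + dist z c := htri a z c
      _ ≤ finsetDiam dist Y' + finsetDiam dist Y :=
        Nat.add_le_add (dist_le_finsetDiam dist ha hz.2) (dist_le_finsetDiam dist hz.1 hc)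
      _ = finsetDiam dist Y + finsetDiam dist Y' := Nat.add_comm _ _
  · exact le_trans (dist_le_finsetDiam dist ha hc) (Nat.le_add_left _ _)

lemma finsetDistToSet_le_of_subset {Γ : Type*} (dist : Γ → Γ → ℕ) {Y' X : Finset Γ} (Z : Set Γ)
    (hsub : Y' ⊆ X) (hY' : Y'.Nonempty) (hZ : Z.Nonempty) :
    finsetDistToSet dist X Z ≤ finsetDistToSet dist Y' Z := by
  have hne : {n : ℕ | ∃ x ∈ Y', ∃ z ∈ Z, dist x z = n}.Nonempty := by
    obtain ⟨y, hy⟩ := hY'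
    obtain ⟨z, hz⟩ := hZ
    exact ⟨dist y z, y, hy, z, hz, rfl⟩
  obtain ⟨y, hy, z, hz, hn⟩ := Nat.sInf_mem hne
  exact Nat.sInf_le ⟨y, hsub hy, z, hz, hn⟩

lemma DZ_union_le {Γ : Type*} [DecidableEq Γ] (dist : Γ → Γ → ℕ)
    (htri : ∀ x y z : Γ, dist x z ≤ dist x y + dist y z)
    {Y Y' X : Finset Γ} (Z : Set Γ) (hZ : Z.Nonempty)
    (hU : Y ∪ Y' = X) (hI : (Y ∩ Y').Nonempty) :
    DZ dist Z X ≤ finsetDiam dist Y + DZ dist Z Y' := by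
  have hY' : Y'.Nonempty := by
    obtain ⟨z, hz⟩ := hI
    exact ⟨z, (Finset.mem_inter.1 hz).2⟩
  have hsub : Y' ⊆ X := by rw [← hU]; exact Finset.subset_union_right
  have h1 := finsetDiam_union_le dist htri hU hI
  have h2 := finsetDistToSet_le_of_subset dist Z hsub hY' hZ
  unfold DZ
  omega

lemma card_le_of_sphere_bound {Γ : Type*} (dist : Γ → Γ → ℕ) (κ : ℝ) (d : ℕ) (hd : 1 ≤ d)
    (hκ : 0 < κ)
    (hsph : ∀ (x : Γ) (r : ℕ), {y : Γ | dist x y = r}.Finite ∧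
      ({y : Γ | dist x y = r}.ncard : ℝ) ≤ κ * (1 + (r : ℝ)) ^ (d - 1))
    {Y : Finset Γ} {x : Γ} (hx : x ∈ Y) :
    (Y.card : ℝ) ≤ κ * (1 + (finsetDiam dist Y : ℝ)) ^ d := by
  classical
  set D := finsetDiam dist Y with hD
  have hsubset : Y ⊆ (Finset.range (D + 1)).biUnion
      (fun r => (hsph x r).1.toFinset) := by
    intro y hy
    rw [Finset.mem_biUnion]
    refine ⟨dist x y, Finset.mem_range.2 (Nat.lt_succ_of_le (dist_le_finsetDiam dist hx hy)),
      ?_⟩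
    simp [Set.Finite.mem_toFinset]
  have hcard : Y.card ≤ ∑ r ∈ Finset.range (D + 1), ((hsph x r).1.toFinset).card :=
    le_trans (Finset.card_le_card hsubset) (Finset.card_biUnion_le)
  have hcast : (Y.card : ℝ) ≤ ∑ r ∈ Finset.range (D + 1), κ * (1 + (r : ℝ)) ^ (d - 1) := by
    calc (Y.card : ℝ) ≤ (∑ r ∈ Finset.range (D + 1), ((hsph x r).1.toFinset).card : ℕ) := by
          exact_mod_cast hcard
      _ = ∑ r ∈ Finset.range (D + 1), (((hsph x r).1.toFinset).card : ℝ) := by push_cast; ring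
      _ ≤ ∑ r ∈ Finset.range (D + 1), κ * (1 + (r : ℝ)) ^ (d - 1) := by
          apply Finset.sum_le_sum
          intro r _
          have := (hsph x r).2
          rwa [Set.ncard_eq_toFinset_card _ (hsph x r).1] at this
  calc (Y.card : ℝ) ≤ ∑ r ∈ Finset.range (D + 1), κ * (1 + (r : ℝ)) ^ (d - 1) := hcast
    _ ≤ ∑ r ∈ Finset.range (D + 1), κ * (1 + (D : ℝ)) ^ (d - 1) := by
        apply Finset.sum_le_sum
        intro r hr
        have hrD : (r : ℝ) ≤ (D : ℝ) := by
          exact_mod_cast Nat.lt_succ_iff.1 (Finset.mem_range.1 hr)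
        apply mul_le_mul_of_nonneg_left _ hκ.le
        apply pow_le_pow_left₀ (by positivity) (by linarith)
    _ = (D + 1 : ℝ) * (κ * (1 + (D : ℝ)) ^ (d - 1)) := by
        rw [Finset.sum_const, Finset.card_range]
        push_cast
        ring
    _ ≤ κ * (1 + (D : ℝ)) ^ d := by
        have : (1 + (D : ℝ)) ^ d = (1 + (D : ℝ)) ^ (d - 1) * (1 + (D : ℝ)) := by
          rw [← pow_succ, Nat.sub_add_cancel hd]
        rw [this]
        have h1 : (0:ℝ) ≤ (1 + (D : ℝ)) ^ (d - 1) := by positivity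
        nlinarith [h1, hκ.le]

/-- The interaction `δ^Φ(Ψ)(X) = ∑ i [Φ(Y), Ψ(Y')]`, the sum running over pairs of subsets
`Y, Y' ⊆ X` with `Y ∪ Y' = X` and `Y ∩ Y' ≠ ∅`. -/
noncomputable def deltaInteraction {Γ : Type*} {A : Type*} [Ring A] [Module ℂ A]
    (Φ Ψ : Finset Γ → A) (X : Finset Γ) : A :=
  haveI := Classical.decEq Γ
  ∑ Y ∈ X.powerset, ∑ Y' ∈ X.powerset,
    if Y ∪ Y' = X ∧ (Y ∩ Y').Nonempty
    then Complex.I • (Φ Y * Ψ Y' - Ψ Y' * Φ Y) else 0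

theorem delta_interaction_norm_bound (p b b' b'' : ℝ) (hp0 : 0 < p) (hp1 : p < 1)
    (hb : 0 < b) (hb' : 0 < b') (hb''0 : 0 < b'') (hb'' : b'' < min b b')
    (κ : ℝ) (hκ : 0 < κ) (d : ℕ) (hd : 1 ≤ d) :
    ∃ C : ℝ, 0 < C ∧
      ∀ (Γ : Type) [Countable Γ], ∀ (dist : Γ → Γ → ℕ),
        (∀ x y : Γ, dist x y = 0 ↔ x = y) →
        (∀ x y : Γ, dist x y = dist y x) →
        (∀ x y z : Γ, dist x z ≤ dist x y + dist y z) →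
        (∀ (x : Γ) (r : ℕ), {y : Γ | dist x y = r}.Finite ∧
          ({y : Γ | dist x y = r}.ncard : ℝ) ≤ κ * (1 + (r : ℝ)) ^ (d - 1)) →
        ∀ (Z : Set Γ), Z.Nonempty →
        ∀ (A : Type) [NormedRing A] [NormedAlgebra ℂ A] [CompleteSpace A],
        ∀ (Φ Ψ : Finset Γ → A) (N M : ℝ),
          Φ ∅ = 0 → Ψ ∅ = 0 → 0 ≤ N → 0 ≤ M →
          (∀ x : Γ,
            Summable (fun Y : {Y : Finset Γ // x ∈ Y} =>
              ‖Φ Y.1‖ * Real.exp (b' * (finsetDiam dist Y.1 : ℝ) ^ p)) ∧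
            ∑' Y : {Y : Finset Γ // x ∈ Y},
              ‖Φ Y.1‖ * Real.exp (b' * (finsetDiam dist Y.1 : ℝ) ^ p) ≤ N) →
          (∀ x : Γ,
            Summable (fun Y' : {Y' : Finset Γ // x ∈ Y'} =>
              ‖Ψ Y'.1‖ * Real.exp (b * (DZ dist Z Y'.1 : ℝ) ^ p)) ∧
            ∑' Y' : {Y' : Finset Γ // x ∈ Y'},
              ‖Ψ Y'.1‖ * Real.exp (b * (DZ dist Z Y'.1 : ℝ) ^ p) ≤ M) →
          ∀ x : Γ,
            Summable (fun X : {X : Finset Γ // x ∈ X} =>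
              ‖deltaInteraction Φ Ψ X.1‖ * Real.exp (b'' * (DZ dist Z X.1 : ℝ) ^ p)) ∧
            ∑' X : {X : Finset Γ // x ∈ X},
              ‖deltaInteraction Φ Ψ X.1‖ * Real.exp (b'' * (DZ dist Z X.1 : ℝ) ^ p) ≤
                C * N * M := by
  have hβ : 0 < min b b' - b'' := sub_pos.mpr hb''
  obtain ⟨C₁, hC₁1, hC₁⟩ :=
    exists_poly_exp_bound p (min b b' - b'') κ d hp0 hp1.le hβ hκ
  have hC₁0 : 0 < C₁ := lt_of_lt_of_le one_pos hC₁1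
  refine ⟨4 * C₁, by linarith, ?_⟩
  intro Γ _ dist hzero hsymm htri hsph Z hZ A _ _ _ Φ Ψ N M hΦ0 hΨ0 hN hM hΦ hΨ x
  classical
  set F : {X : Finset Γ // x ∈ X} → ℝ := fun X =>
    ‖deltaInteraction Φ Ψ X.1‖ * Real.exp (b'' * (DZ dist Z X.1 : ℝ) ^ p) with hFdef
  have hF0 : ∀ X, 0 ≤ F X := fun X => mul_nonneg (norm_nonneg _) (Real.exp_nonneg _)
  -- real-valued weights
  set g : Finset Γ → ℝ := fun Y => ‖Φ Y‖ * Real.exp (b'' * (finsetDiam dist Y : ℝ) ^ p)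
    with hgdef
  set h : Finset Γ → ℝ := fun Y' => ‖Ψ Y'‖ * Real.exp (b'' * (DZ dist Z Y' : ℝ) ^ p) with hhdef
  have hg0 : ∀ Y, 0 ≤ g Y := fun Y => mul_nonneg (norm_nonneg _) (Real.exp_nonneg _)
  have hh0 : ∀ Y, 0 ≤ h Y := fun Y => mul_nonneg (norm_nonneg _) (Real.exp_nonneg _)
  -- ENNReal weights
  set a : Finset Γ → ℝ≥0∞ := fun Y => ENNReal.ofReal (g Y) with hadef
  set c : Finset Γ → ℝ≥0∞ := fun Y' => ENNReal.ofReal (h Y') with hcdef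
  -- hypotheses in ENNReal/indicator form, exact exponents
  have hΦE' : ∀ y : Γ, (∑' Y : Finset Γ, (if y ∈ Y then
      ENNReal.ofReal (‖Φ Y‖ * Real.exp (b' * (finsetDiam dist Y : ℝ) ^ p)) else 0)) ≤
      ENNReal.ofReal N := by
    intro y
    calc (∑' Y : Finset Γ, (if y ∈ Y then
          ENNReal.ofReal (‖Φ Y‖ * Real.exp (b' * (finsetDiam dist Y : ℝ) ^ p)) else 0))
        = ∑' Y : Finset Γ, Set.indicator {Y₀ : Finset Γ | y ∈ Y₀}
            (fun Y => ENNReal.ofReal (‖Φ Y‖ * Real.exp (b' * (finsetDiam dist Y : ℝ) ^ p))) Y :=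
          tsum_congr fun Y => by simp [Set.indicator_apply]
      _ = ∑' Y : {Y₀ : Finset Γ | y ∈ Y₀},
            ENNReal.ofReal (‖Φ Y.1‖ * Real.exp (b' * (finsetDiam dist Y.1 : ℝ) ^ p)) :=
          (tsum_subtype _ _).symm
      _ = ENNReal.ofReal (∑' Y : {Y₀ : Finset Γ // y ∈ Y₀},
            ‖Φ Y.1‖ * Real.exp (b' * (finsetDiam dist Y.1 : ℝ) ^ p)) :=
          (ENNReal.ofReal_tsum_of_nonneg
            (fun Y => mul_nonneg (norm_nonneg _) (Real.exp_nonneg _)) (hΦ y).1).symm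
      _ ≤ ENNReal.ofReal N := ENNReal.ofReal_le_ofReal (hΦ y).2
  have hΨE' : ∀ y : Γ, (∑' Y' : Finset Γ, (if y ∈ Y' then
      ENNReal.ofReal (‖Ψ Y'‖ * Real.exp (b * (DZ dist Z Y' : ℝ) ^ p)) else 0)) ≤
      ENNReal.ofReal M := by
    intro y
    calc (∑' Y' : Finset Γ, (if y ∈ Y' then
          ENNReal.ofReal (‖Ψ Y'‖ * Real.exp (b * (DZ dist Z Y' : ℝ) ^ p)) else 0))
        = ∑' Y' : Finset Γ, Set.indicator {Y₀ : Finset Γ | y ∈ Y₀}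
            (fun Y' => ENNReal.ofReal (‖Ψ Y'‖ * Real.exp (b * (DZ dist Z Y' : ℝ) ^ p))) Y' :=
          tsum_congr fun Y' => by simp [Set.indicator_apply]
      _ = ∑' Y' : {Y₀ : Finset Γ | y ∈ Y₀},
            ENNReal.ofReal (‖Ψ Y'.1‖ * Real.exp (b * (DZ dist Z Y'.1 : ℝ) ^ p)) :=
          (tsum_subtype _ _).symm
      _ = ENNReal.ofReal (∑' Y' : {Y₀ : Finset Γ // y ∈ Y₀},
            ‖Ψ Y'.1‖ * Real.exp (b * (DZ dist Z Y'.1 : ℝ) ^ p)) :=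
          (ENNReal.ofReal_tsum_of_nonneg
            (fun Y' => mul_nonneg (norm_nonneg _) (Real.exp_nonneg _)) (hΨ y).1).symm
      _ ≤ ENNReal.ofReal M := ENNReal.ofReal_le_ofReal (hΨ y).2
  -- weakened versions with exponent b''
  have hb''b : b'' ≤ b := le_of_lt (lt_of_lt_of_le hb'' (min_le_left b b'))
  have hb''b' : b'' ≤ b' := le_of_lt (lt_of_lt_of_le hb'' (min_le_right b b'))
  have hΦE : ∀ y : Γ, (∑' Y : Finset Γ, (if y ∈ Y then a Y else 0)) ≤ ENNReal.ofReal N := by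
    intro y
    refine le_trans (ENNReal.tsum_le_tsum fun Y => ?_) (hΦE' y)
    by_cases hy : y ∈ Y
    · rw [if_pos hy, if_pos hy, hadef]
      apply ENNReal.ofReal_le_ofReal
      apply mul_le_mul_of_nonneg_left _ (norm_nonneg _)
      apply Real.exp_le_exp.2
      exact mul_le_mul_of_nonneg_right hb''b' (Real.rpow_nonneg (Nat.cast_nonneg _) p)
    · rw [if_neg hy, if_neg hy]
  have hΨE : ∀ y : Γ, (∑' Y' : Finset Γ, (if y ∈ Y' then c Y' else 0)) ≤ ENNReal.ofReal M := by
    intro y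
    refine le_trans (ENNReal.tsum_le_tsum fun Y' => ?_) (hΨE' y)
    by_cases hy : y ∈ Y'
    · rw [if_pos hy, if_pos hy, hcdef]
      apply ENNReal.ofReal_le_ofReal
      apply mul_le_mul_of_nonneg_left _ (norm_nonneg _)
      apply Real.exp_le_exp.2
      exact mul_le_mul_of_nonneg_right hb''b (Real.rpow_nonneg (Nat.cast_nonneg _) p)
    · rw [if_neg hy, if_neg hy]
  -- pointwise bound in ℝ
  have step1 : ∀ X : {X : Finset Γ // x ∈ X},
      F X ≤ ∑ Y ∈ X.1.powerset, ∑ Y' ∈ X.1.powerset,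
        (if Y ∪ Y' = X.1 ∧ (Y ∩ Y').Nonempty then 2 * g Y * h Y' else 0) := by
    intro X
    have hδ : ‖deltaInteraction Φ Ψ X.1‖ ≤ ∑ Y ∈ X.1.powerset, ∑ Y' ∈ X.1.powerset,
        (if Y ∪ Y' = X.1 ∧ (Y ∩ Y').Nonempty then 2 * ‖Φ Y‖ * ‖Ψ Y'‖ else 0) := by
      unfold deltaInteraction
      refine le_trans (norm_sum_le _ _) (Finset.sum_le_sum fun Y _ => ?_)
      refine le_trans (norm_sum_le _ _) (Finset.sum_le_sum fun Y' _ => ?_)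
      by_cases hc : Y ∪ Y' = X.1 ∧ (Y ∩ Y').Nonempty
      · rw [if_pos hc, if_pos hc, norm_smul, Complex.norm_I, one_mul]
        refine le_trans (norm_sub_le _ _) ?_
        have h1 := norm_mul_le (Φ Y) (Ψ Y')
        have h2 := norm_mul_le (Ψ Y') (Φ Y)
        have h3 : ‖Ψ Y'‖ * ‖Φ Y‖ = ‖Φ Y‖ * ‖Ψ Y'‖ := mul_comm _ _
        linarith
      · rw [if_neg hc, if_neg hc, norm_zero]
    have he0 : 0 ≤ Real.exp (b'' * (DZ dist Z X.1 : ℝ) ^ p) := Real.exp_nonneg _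
    have hFX : F X = ‖deltaInteraction Φ Ψ X.1‖ * Real.exp (b'' * (DZ dist Z X.1 : ℝ) ^ p) := rfl
    rw [hFX]
    refine le_trans (mul_le_mul_of_nonneg_right hδ he0) ?_
    rw [Finset.sum_mul]
    refine Finset.sum_le_sum fun Y _ => ?_
    rw [Finset.sum_mul]
    refine Finset.sum_le_sum fun Y' _ => ?_
    rw [ite_mul, zero_mul]
    by_cases hc : Y ∪ Y' = X.1 ∧ (Y ∩ Y').Nonempty
    · rw [if_pos hc, if_pos hc]
      have hd1 : (DZ dist Z X.1 : ℝ) ≤ (finsetDiam dist Y : ℝ) + (DZ dist Z Y' : ℝ) := by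
        have := DZ_union_le dist htri Z hZ hc.1 hc.2
        exact_mod_cast this
      have hr : (DZ dist Z X.1 : ℝ) ^ p ≤
          (finsetDiam dist Y : ℝ) ^ p + (DZ dist Z Y' : ℝ) ^ p := by
        refine le_trans (Real.rpow_le_rpow (Nat.cast_nonneg _) hd1 hp0.le) ?_
        exact my_rpow_add_le (Nat.cast_nonneg _) (Nat.cast_nonneg _) hp0.le hp1.le
      have hexp : Real.exp (b'' * (DZ dist Z X.1 : ℝ) ^ p) ≤
          Real.exp (b'' * (finsetDiam dist Y : ℝ) ^ p) *
          Real.exp (b'' * (DZ dist Z Y' : ℝ) ^ p) := by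
        rw [← Real.exp_add]
        apply Real.exp_le_exp.2
        nlinarith [mul_le_mul_of_nonneg_left hr hb''0.le]
      calc 2 * ‖Φ Y‖ * ‖Ψ Y'‖ * Real.exp (b'' * (DZ dist Z X.1 : ℝ) ^ p)
          ≤ 2 * ‖Φ Y‖ * ‖Ψ Y'‖ *
            (Real.exp (b'' * (finsetDiam dist Y : ℝ) ^ p) *
             Real.exp (b'' * (DZ dist Z Y' : ℝ) ^ p)) := by
            apply mul_le_mul_of_nonneg_left hexp (by positivity)
        _ = 2 * g Y * h Y' := by rw [hgdef, hhdef]; ring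
    · rw [if_neg hc, if_neg hc]
  -- the ENNReal term
  set T : Finset Γ → Finset Γ → ℝ≥0∞ := fun Y Y' => 2 * a Y * c Y' with hTdef
  have hofT : ∀ Y Y' : Finset Γ, ENNReal.ofReal (2 * g Y * h Y') = T Y Y' := by
    intro Y Y'
    rw [hTdef, ENNReal.ofReal_mul (by positivity), ENNReal.ofReal_mul (by positivity)]
    simp [hadef, hcdef]
  -- step 2 : tsum over pairs
  have step2 : ∀ X : {X : Finset Γ // x ∈ X},
      ENNReal.ofReal (F X) ≤ ∑' YY' : Finset Γ × Finset Γ,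
        (if YY'.1 ∪ YY'.2 = X.1 ∧ (YY'.1 ∩ YY'.2).Nonempty then T YY'.1 YY'.2 else 0) := by
    intro X
    have hsupp : ∀ YY' : Finset Γ × Finset Γ, YY' ∉ X.1.powerset ×ˢ X.1.powerset →
        (if YY'.1 ∪ YY'.2 = X.1 ∧ (YY'.1 ∩ YY'.2).Nonempty then T YY'.1 YY'.2 else 0) = 0 := by
      intro YY' hm
      rw [if_neg]
      rintro ⟨h1, -⟩
      apply hm
      rw [Finset.mem_product, Finset.mem_powerset, Finset.mem_powerset]
      constructor
      · rw [← h1]; exact Finset.subset_union_left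
      · rw [← h1]; exact Finset.subset_union_right
    have hterm0 : ∀ Y Y' : Finset Γ,
        0 ≤ (if Y ∪ Y' = X.1 ∧ (Y ∩ Y').Nonempty then 2 * g Y * h Y' else 0) := by
      intro Y Y'
      split
      · have := hg0 Y; have := hh0 Y'; positivity
      · exact le_refl 0
    calc ENNReal.ofReal (F X)
        ≤ ENNReal.ofReal (∑ Y ∈ X.1.powerset, ∑ Y' ∈ X.1.powerset,
            (if Y ∪ Y' = X.1 ∧ (Y ∩ Y').Nonempty then 2 * g Y * h Y' else 0)) :=
          ENNReal.ofReal_le_ofReal (step1 X)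
      _ = ∑ Y ∈ X.1.powerset, ENNReal.ofReal (∑ Y' ∈ X.1.powerset,
            (if Y ∪ Y' = X.1 ∧ (Y ∩ Y').Nonempty then 2 * g Y * h Y' else 0)) :=
          ENNReal.ofReal_sum_of_nonneg fun Y _ =>
            Finset.sum_nonneg fun Y' _ => hterm0 Y Y'
      _ = ∑ Y ∈ X.1.powerset, ∑ Y' ∈ X.1.powerset, ENNReal.ofReal
            (if Y ∪ Y' = X.1 ∧ (Y ∩ Y').Nonempty then 2 * g Y * h Y' else 0) :=
          Finset.sum_congr rfl fun Y _ =>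
            ENNReal.ofReal_sum_of_nonneg fun Y' _ => hterm0 Y Y'
      _ = ∑ Y ∈ X.1.powerset, ∑ Y' ∈ X.1.powerset,
            (if Y ∪ Y' = X.1 ∧ (Y ∩ Y').Nonempty then T Y Y' else 0) := by
          refine Finset.sum_congr rfl fun Y _ => Finset.sum_congr rfl fun Y' _ => ?_
          by_cases hc : Y ∪ Y' = X.1 ∧ (Y ∩ Y').Nonempty
          · rw [if_pos hc, if_pos hc, hofT]
          · rw [if_neg hc, if_neg hc, ENNReal.ofReal_zero]
      _ = ∑' YY' : Finset Γ × Finset Γ,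
            (if YY'.1 ∪ YY'.2 = X.1 ∧ (YY'.1 ∩ YY'.2).Nonempty then T YY'.1 YY'.2 else 0) := by
          rw [tsum_eq_sum hsupp, Finset.sum_product]
  -- step 4 : per-pair bound after swapping
  have step4 : ∀ YY' : Finset Γ × Finset Γ,
      (∑' X : {X : Finset Γ // x ∈ X},
        (if YY'.1 ∪ YY'.2 = X.1 ∧ (YY'.1 ∩ YY'.2).Nonempty then T YY'.1 YY'.2 else 0)) ≤
      (if x ∈ YY'.1 ∧ (YY'.1 ∩ YY'.2).Nonempty then T YY'.1 YY'.2 else 0) +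
      (if x ∈ YY'.2 ∧ (YY'.1 ∩ YY'.2).Nonempty then T YY'.1 YY'.2 else 0) := by
    rintro ⟨Y, Y'⟩
    simp only
    by_cases hint : (Y ∩ Y').Nonempty
    · by_cases hxu : x ∈ Y ∪ Y'
      · have heq : (∑' X : {X : Finset Γ // x ∈ X},
            (if Y ∪ Y' = X.1 ∧ (Y ∩ Y').Nonempty then T Y Y' else 0)) = T Y Y' := by
          rw [tsum_eq_single (⟨Y ∪ Y', hxu⟩ : {X : Finset Γ // x ∈ X})]
          · rw [if_pos ⟨rfl, hint⟩]
          · intro X hX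
            rw [if_neg]
            rintro ⟨h1, -⟩
            exact hX (Subtype.ext h1.symm)
        rw [heq]
        rcases Finset.mem_union.1 hxu with hx1 | hx2
        · rw [if_pos ⟨hx1, hint⟩]; exact le_self_add
        · exact le_trans (le_of_eq (if_pos ⟨hx2, hint⟩).symm) le_add_self
      · have hzero : ∀ X : {X : Finset Γ // x ∈ X},
            (if Y ∪ Y' = X.1 ∧ (Y ∩ Y').Nonempty then T Y Y' else 0) = 0 := by
          intro X
          rw [if_neg]
          rintro ⟨h1, -⟩
          exact hxu (h1 ▸ X.2)
        rw [tsum_congr hzero, tsum_zero]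
        exact zero_le
    · simp [hint]
  -- inner sums
  have innerΨ : ∀ Y : Finset Γ,
      (∑' Y' : Finset Γ, (if (Y ∩ Y').Nonempty then c Y' else 0)) ≤
        (Y.card : ℝ≥0∞) * ENNReal.ofReal M := by
    intro Y
    have hpt : ∀ Y' : Finset Γ, (if (Y ∩ Y').Nonempty then c Y' else 0) ≤
        ∑ y ∈ Y, (if y ∈ Y' then c Y' else 0) := by
      intro Y'
      by_cases hc' : (Y ∩ Y').Nonempty
      · rw [if_pos hc']
        obtain ⟨y₀, hy₀⟩ := hc'
        rw [Finset.mem_inter] at hy₀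
        have hs := Finset.single_le_sum (f := fun y => if y ∈ Y' then c Y' else 0)
          (fun i _ => zero_le) hy₀.1
        simpa [hy₀.2] using hs
      · rw [if_neg hc']; exact zero_le
    calc (∑' Y' : Finset Γ, (if (Y ∩ Y').Nonempty then c Y' else 0))
        ≤ ∑' Y' : Finset Γ, ∑ y ∈ Y, (if y ∈ Y' then c Y' else 0) :=
          ENNReal.tsum_le_tsum hpt
      _ = ∑ y ∈ Y, ∑' Y' : Finset Γ, (if y ∈ Y' then c Y' else 0) :=
          Summable.tsum_finsetSum fun _ _ => ENNReal.summable
      _ ≤ ∑ y ∈ Y, ENNReal.ofReal M := Finset.sum_le_sum fun y _ => hΨE y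
      _ = (Y.card : ℝ≥0∞) * ENNReal.ofReal M := by
          rw [Finset.sum_const, nsmul_eq_mul]
  have innerΦ : ∀ Y' : Finset Γ,
      (∑' Y : Finset Γ, (if (Y ∩ Y').Nonempty then a Y else 0)) ≤
        (Y'.card : ℝ≥0∞) * ENNReal.ofReal N := by
    intro Y'
    have hpt : ∀ Y : Finset Γ, (if (Y ∩ Y').Nonempty then a Y else 0) ≤
        ∑ y ∈ Y', (if y ∈ Y then a Y else 0) := by
      intro Y
      by_cases hc' : (Y ∩ Y').Nonempty
      · rw [if_pos hc']
        obtain ⟨y₀, hy₀⟩ := hc'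
        rw [Finset.mem_inter] at hy₀
        have hs := Finset.single_le_sum (f := fun y => if y ∈ Y then a Y else 0)
          (fun i _ => zero_le) hy₀.2
        simpa [hy₀.1] using hs
      · rw [if_neg hc']; exact zero_le
    calc (∑' Y : Finset Γ, (if (Y ∩ Y').Nonempty then a Y else 0))
        ≤ ∑' Y : Finset Γ, ∑ y ∈ Y', (if y ∈ Y then a Y else 0) :=
          ENNReal.tsum_le_tsum hpt
      _ = ∑ y ∈ Y', ∑' Y : Finset Γ, (if y ∈ Y then a Y else 0) :=
          Summable.tsum_finsetSum fun _ _ => ENNReal.summable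
      _ ≤ ∑ y ∈ Y', ENNReal.ofReal N := Finset.sum_le_sum fun y _ => hΦE y
      _ = (Y'.card : ℝ≥0∞) * ENNReal.ofReal N := by
          rw [Finset.sum_const, nsmul_eq_mul]
  -- cardinality absorbed into exponential
  have absorbΦ : ∀ Y : Finset Γ, x ∈ Y →
      a Y * (Y.card : ℝ≥0∞) ≤
        ENNReal.ofReal (C₁ * (‖Φ Y‖ * Real.exp (b' * (finsetDiam dist Y : ℝ) ^ p))) := by
    intro Y hxY
    have hcard : (Y.card : ℝ) ≤ κ * (1 + (finsetDiam dist Y : ℝ)) ^ d :=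
      card_le_of_sphere_bound dist κ d hd hκ hsph hxY
    have hcard2 : κ * (1 + (finsetDiam dist Y : ℝ)) ^ d ≤
        C₁ * Real.exp ((min b b' - b'') * (finsetDiam dist Y : ℝ) ^ p) :=
      hC₁ _ (Nat.cast_nonneg _)
    have ht : (0:ℝ) ≤ (finsetDiam dist Y : ℝ) ^ p := Real.rpow_nonneg (Nat.cast_nonneg _) _
    calc a Y * (Y.card : ℝ≥0∞)
        = ENNReal.ofReal (g Y * (Y.card : ℝ)) := by
          rw [ENNReal.ofReal_mul (hg0 Y), ENNReal.ofReal_natCast, hadef]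
      _ ≤ ENNReal.ofReal (g Y *
            (C₁ * Real.exp ((min b b' - b'') * (finsetDiam dist Y : ℝ) ^ p))) :=
          ENNReal.ofReal_le_ofReal
            (mul_le_mul_of_nonneg_left (hcard.trans hcard2) (hg0 Y))
      _ ≤ ENNReal.ofReal (C₁ * (‖Φ Y‖ * Real.exp (b' * (finsetDiam dist Y : ℝ) ^ p))) := by
          apply ENNReal.ofReal_le_ofReal
          have hee : Real.exp (b'' * (finsetDiam dist Y : ℝ) ^ p) *
              Real.exp ((min b b' - b'') * (finsetDiam dist Y : ℝ) ^ p) ≤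
              Real.exp (b' * (finsetDiam dist Y : ℝ) ^ p) := by
            rw [← Real.exp_add]
            apply Real.exp_le_exp.2
            have hmin : min b b' ≤ b' := min_le_right _ _
            nlinarith [ht]
          calc g Y * (C₁ * Real.exp ((min b b' - b'') * (finsetDiam dist Y : ℝ) ^ p))
              = C₁ * (‖Φ Y‖ * (Real.exp (b'' * (finsetDiam dist Y : ℝ) ^ p) *
                  Real.exp ((min b b' - b'') * (finsetDiam dist Y : ℝ) ^ p))) := by
                rw [hgdef]; ring
            _ ≤ C₁ * (‖Φ Y‖ * Real.exp (b' * (finsetDiam dist Y : ℝ) ^ p)) := by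
                apply mul_le_mul_of_nonneg_left _ hC₁0.le
                exact mul_le_mul_of_nonneg_left hee (norm_nonneg _)
  have absorbΨ : ∀ Y' : Finset Γ, x ∈ Y' →
      c Y' * (Y'.card : ℝ≥0∞) ≤
        ENNReal.ofReal (C₁ * (‖Ψ Y'‖ * Real.exp (b * (DZ dist Z Y' : ℝ) ^ p))) := by
    intro Y' hxY'
    have hDle : (finsetDiam dist Y' : ℝ) ≤ (DZ dist Z Y' : ℝ) := by
      have : finsetDiam dist Y' ≤ DZ dist Z Y' := Nat.le_add_right _ _
      exact_mod_cast this
    have hcard : (Y'.card : ℝ) ≤ κ * (1 + (DZ dist Z Y' : ℝ)) ^ d := by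
      refine le_trans (card_le_of_sphere_bound dist κ d hd hκ hsph hxY') ?_
      apply mul_le_mul_of_nonneg_left _ hκ.le
      apply pow_le_pow_left₀ (by positivity) (by linarith)
    have hcard2 : κ * (1 + (DZ dist Z Y' : ℝ)) ^ d ≤
        C₁ * Real.exp ((min b b' - b'') * (DZ dist Z Y' : ℝ) ^ p) :=
      hC₁ _ (Nat.cast_nonneg _)
    have ht : (0:ℝ) ≤ (DZ dist Z Y' : ℝ) ^ p := Real.rpow_nonneg (Nat.cast_nonneg _) _
    calc c Y' * (Y'.card : ℝ≥0∞)
        = ENNReal.ofReal (h Y' * (Y'.card : ℝ)) := by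
          rw [ENNReal.ofReal_mul (hh0 Y'), ENNReal.ofReal_natCast, hcdef]
      _ ≤ ENNReal.ofReal (h Y' *
            (C₁ * Real.exp ((min b b' - b'') * (DZ dist Z Y' : ℝ) ^ p))) :=
          ENNReal.ofReal_le_ofReal
            (mul_le_mul_of_nonneg_left (hcard.trans hcard2) (hh0 Y'))
      _ ≤ ENNReal.ofReal (C₁ * (‖Ψ Y'‖ * Real.exp (b * (DZ dist Z Y' : ℝ) ^ p))) := by
          apply ENNReal.ofReal_le_ofReal
          have hee : Real.exp (b'' * (DZ dist Z Y' : ℝ) ^ p) *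
              Real.exp ((min b b' - b'') * (DZ dist Z Y' : ℝ) ^ p) ≤
              Real.exp (b * (DZ dist Z Y' : ℝ) ^ p) := by
            rw [← Real.exp_add]
            apply Real.exp_le_exp.2
            have hmin : min b b' ≤ b := min_le_left _ _
            nlinarith [ht]
          calc h Y' * (C₁ * Real.exp ((min b b' - b'') * (DZ dist Z Y' : ℝ) ^ p))
              = C₁ * (‖Ψ Y'‖ * (Real.exp (b'' * (DZ dist Z Y' : ℝ) ^ p) *
                  Real.exp ((min b b' - b'') * (DZ dist Z Y' : ℝ) ^ p))) := by
                rw [hhdef]; ring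
            _ ≤ C₁ * (‖Ψ Y'‖ * Real.exp (b * (DZ dist Z Y' : ℝ) ^ p)) := by
                apply mul_le_mul_of_nonneg_left _ hC₁0.le
                exact mul_le_mul_of_nonneg_left hee (norm_nonneg _)
  -- combine ofReal products
  have hcombine : (2 : ℝ≥0∞) * ENNReal.ofReal M * ENNReal.ofReal C₁ * ENNReal.ofReal N =
      ENNReal.ofReal (2 * C₁ * N * M) := by
    rw [ENNReal.ofReal_mul (by positivity), ENNReal.ofReal_mul (by positivity),
      ENNReal.ofReal_mul (by positivity), ENNReal.ofReal_ofNat]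
    ring
  -- T1 bound
  have hT1 : (∑' YY' : Finset Γ × Finset Γ,
      (if x ∈ YY'.1 ∧ (YY'.1 ∩ YY'.2).Nonempty then T YY'.1 YY'.2 else 0)) ≤
      ENNReal.ofReal (2 * C₁ * N * M) := by
    rw [ENNReal.tsum_prod (f := fun Y Y' => if x ∈ Y ∧ (Y ∩ Y').Nonempty then T Y Y' else 0)]
    calc (∑' Y : Finset Γ, ∑' Y' : Finset Γ,
          (if x ∈ Y ∧ (Y ∩ Y').Nonempty then T Y Y' else 0))
        ≤ ∑' Y : Finset Γ, (if x ∈ Y then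
            ENNReal.ofReal (‖Φ Y‖ * Real.exp (b' * (finsetDiam dist Y : ℝ) ^ p)) *
            (ENNReal.ofReal C₁ * (2 * ENNReal.ofReal M)) else 0) := by
          apply ENNReal.tsum_le_tsum
          intro Y
          by_cases hxY : x ∈ Y
          · rw [if_pos hxY]
            calc (∑' Y' : Finset Γ, (if x ∈ Y ∧ (Y ∩ Y').Nonempty then T Y Y' else 0))
                = ∑' Y' : Finset Γ, 2 * a Y * (if (Y ∩ Y').Nonempty then c Y' else 0) := by
                  refine tsum_congr fun Y' => ?_
                  by_cases hc' : (Y ∩ Y').Nonempty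
                  · rw [if_pos ⟨hxY, hc'⟩, if_pos hc', hTdef]
                  · rw [if_neg fun hh => hc' hh.2, if_neg hc', mul_zero]
              _ = 2 * a Y * ∑' Y' : Finset Γ, (if (Y ∩ Y').Nonempty then c Y' else 0) :=
                  ENNReal.tsum_mul_left
              _ ≤ 2 * a Y * ((Y.card : ℝ≥0∞) * ENNReal.ofReal M) :=
                  mul_le_mul_right (innerΨ Y) _
              _ = (a Y * (Y.card : ℝ≥0∞)) * (2 * ENNReal.ofReal M) := by ring
              _ ≤ ENNReal.ofReal (C₁ * (‖Φ Y‖ * Real.exp (b' * (finsetDiam dist Y : ℝ) ^ p))) *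
                  (2 * ENNReal.ofReal M) := mul_le_mul_left (absorbΦ Y hxY) _
              _ = ENNReal.ofReal (‖Φ Y‖ * Real.exp (b' * (finsetDiam dist Y : ℝ) ^ p)) *
                  (ENNReal.ofReal C₁ * (2 * ENNReal.ofReal M)) := by
                  rw [ENNReal.ofReal_mul hC₁0.le]; ring
          · rw [if_neg hxY]
            have hzero : ∀ Y' : Finset Γ,
                (if x ∈ Y ∧ (Y ∩ Y').Nonempty then T Y Y' else 0) = 0 := fun Y' =>
              if_neg fun hh => hxY hh.1
            rw [tsum_congr hzero, tsum_zero]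
      _ = (∑' Y : Finset Γ, (if x ∈ Y then
            ENNReal.ofReal (‖Φ Y‖ * Real.exp (b' * (finsetDiam dist Y : ℝ) ^ p)) else 0)) *
            (ENNReal.ofReal C₁ * (2 * ENNReal.ofReal M)) := by
          rw [← ENNReal.tsum_mul_right]
          refine tsum_congr fun Y => ?_
          by_cases hxY : x ∈ Y
          · rw [if_pos hxY, if_pos hxY]
          · rw [if_neg hxY, if_neg hxY, zero_mul]
      _ ≤ ENNReal.ofReal N * (ENNReal.ofReal C₁ * (2 * ENNReal.ofReal M)) :=
          mul_le_mul_left (hΦE' x) _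
      _ = ENNReal.ofReal (2 * C₁ * N * M) := by rw [← hcombine]; ring
  -- T2 bound
  have hT2 : (∑' YY' : Finset Γ × Finset Γ,
      (if x ∈ YY'.2 ∧ (YY'.1 ∩ YY'.2).Nonempty then T YY'.1 YY'.2 else 0)) ≤
      ENNReal.ofReal (2 * C₁ * N * M) := by
    rw [ENNReal.tsum_prod (f := fun Y Y' => if x ∈ Y' ∧ (Y ∩ Y').Nonempty then T Y Y' else 0),
      ENNReal.tsum_comm]
    calc (∑' Y' : Finset Γ, ∑' Y : Finset Γ,
          (if x ∈ Y' ∧ (Y ∩ Y').Nonempty then T Y Y' else 0))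
        ≤ ∑' Y' : Finset Γ, (if x ∈ Y' then
            ENNReal.ofReal (‖Ψ Y'‖ * Real.exp (b * (DZ dist Z Y' : ℝ) ^ p)) *
            (ENNReal.ofReal C₁ * (2 * ENNReal.ofReal N)) else 0) := by
          apply ENNReal.tsum_le_tsum
          intro Y'
          by_cases hxY' : x ∈ Y'
          · rw [if_pos hxY']
            calc (∑' Y : Finset Γ, (if x ∈ Y' ∧ (Y ∩ Y').Nonempty then T Y Y' else 0))
                = ∑' Y : Finset Γ, 2 * c Y' * (if (Y ∩ Y').Nonempty then a Y else 0) := by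
                  refine tsum_congr fun Y => ?_
                  by_cases hc' : (Y ∩ Y').Nonempty
                  · rw [if_pos ⟨hxY', hc'⟩, if_pos hc', hTdef]
                    ring
                  · rw [if_neg fun hh => hc' hh.2, if_neg hc', mul_zero]
              _ = 2 * c Y' * ∑' Y : Finset Γ, (if (Y ∩ Y').Nonempty then a Y else 0) :=
                  ENNReal.tsum_mul_left
              _ ≤ 2 * c Y' * ((Y'.card : ℝ≥0∞) * ENNReal.ofReal N) :=
                  mul_le_mul_right (innerΦ Y') _
              _ = (c Y' * (Y'.card : ℝ≥0∞)) * (2 * ENNReal.ofReal N) := by ring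
              _ ≤ ENNReal.ofReal (C₁ * (‖Ψ Y'‖ * Real.exp (b * (DZ dist Z Y' : ℝ) ^ p))) *
                  (2 * ENNReal.ofReal N) := mul_le_mul_left (absorbΨ Y' hxY') _
              _ = ENNReal.ofReal (‖Ψ Y'‖ * Real.exp (b * (DZ dist Z Y' : ℝ) ^ p)) *
                  (ENNReal.ofReal C₁ * (2 * ENNReal.ofReal N)) := by
                  rw [ENNReal.ofReal_mul hC₁0.le]; ring
          · rw [if_neg hxY']
            have hzero : ∀ Y : Finset Γ,
                (if x ∈ Y' ∧ (Y ∩ Y').Nonempty then T Y Y' else 0) = 0 := fun Y =>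
              if_neg fun hh => hxY' hh.1
            rw [tsum_congr hzero, tsum_zero]
      _ = (∑' Y' : Finset Γ, (if x ∈ Y' then
            ENNReal.ofReal (‖Ψ Y'‖ * Real.exp (b * (DZ dist Z Y' : ℝ) ^ p)) else 0)) *
            (ENNReal.ofReal C₁ * (2 * ENNReal.ofReal N)) := by
          rw [← ENNReal.tsum_mul_right]
          refine tsum_congr fun Y' => ?_
          by_cases hxY' : x ∈ Y'
          · rw [if_pos hxY', if_pos hxY']
          · rw [if_neg hxY', if_neg hxY', zero_mul]
      _ ≤ ENNReal.ofReal M * (ENNReal.ofReal C₁ * (2 * ENNReal.ofReal N)) :=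
          mul_le_mul_left (hΨE' x) _
      _ = ENNReal.ofReal (2 * C₁ * N * M) := by rw [← hcombine]; ring
  -- assemble
  have hS : (∑' X : {X : Finset Γ // x ∈ X}, ENNReal.ofReal (F X)) ≤
      ENNReal.ofReal (4 * C₁ * N * M) := by
    calc (∑' X : {X : Finset Γ // x ∈ X}, ENNReal.ofReal (F X))
        ≤ ∑' X : {X : Finset Γ // x ∈ X}, ∑' YY' : Finset Γ × Finset Γ,
            (if YY'.1 ∪ YY'.2 = X.1 ∧ (YY'.1 ∩ YY'.2).Nonempty then T YY'.1 YY'.2 else 0) :=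
          ENNReal.tsum_le_tsum step2
      _ = ∑' YY' : Finset Γ × Finset Γ, ∑' X : {X : Finset Γ // x ∈ X},
            (if YY'.1 ∪ YY'.2 = X.1 ∧ (YY'.1 ∩ YY'.2).Nonempty then T YY'.1 YY'.2 else 0) :=
          ENNReal.tsum_comm
      _ ≤ ∑' YY' : Finset Γ × Finset Γ,
            ((if x ∈ YY'.1 ∧ (YY'.1 ∩ YY'.2).Nonempty then T YY'.1 YY'.2 else 0) +
             (if x ∈ YY'.2 ∧ (YY'.1 ∩ YY'.2).Nonempty then T YY'.1 YY'.2 else 0)) :=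
          ENNReal.tsum_le_tsum step4
      _ = (∑' YY' : Finset Γ × Finset Γ,
            (if x ∈ YY'.1 ∧ (YY'.1 ∩ YY'.2).Nonempty then T YY'.1 YY'.2 else 0)) +
          (∑' YY' : Finset Γ × Finset Γ,
            (if x ∈ YY'.2 ∧ (YY'.1 ∩ YY'.2).Nonempty then T YY'.1 YY'.2 else 0)) :=
          ENNReal.tsum_add
      _ ≤ ENNReal.ofReal (2 * C₁ * N * M) + ENNReal.ofReal (2 * C₁ * N * M) :=
          add_le_add hT1 hT2
      _ = ENNReal.ofReal (4 * C₁ * N * M) := by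
          rw [← ENNReal.ofReal_add (by positivity) (by positivity)]
          ring_nf
  have hS_ne : (∑' X : {X : Finset Γ // x ∈ X}, ENNReal.ofReal (F X)) ≠ ⊤ :=
    ne_top_of_le_ne_top ENNReal.ofReal_ne_top hS
  have hsummable : Summable F := by
    have := ENNReal.summable_toReal hS_ne
    refine this.congr fun X => ?_
    exact ENNReal.toReal_ofReal (hF0 X)
  refine ⟨hsummable, ?_⟩
  have heq := ENNReal.ofReal_tsum_of_nonneg hF0 hsummable
  have hfin : ENNReal.ofReal (∑' X, F X) ≤ ENNReal.ofReal (4 * C₁ * N * M) := by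
    rw [heq]; exact hS
  rw [ENNReal.ofReal_le_ofReal_iff (by positivity)] at hfin
  exact hfin
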